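/- arXiv:1709.09991 — 2 statements merged into one kernel-verified Lean document; each statement's English description precedes it below -/
import Mathlib

section
/- Let M be an MSC with events on processes p and q, intervals [e₁,e₁'], …, [e_k,e_k'] of events on p, and events f₁ < ⋯ < f_k on q such that for all i: Past_p(e_i) ⊆ Past_p(f_i) and Fut_p(e_i') ⊆ Fut_p(f_i) (so Par_p(f_i) ⊆ [e_i,e_i']). Suppose additionally that for all i and all process sequences 𝕡 from p to q, last_𝕡(f_i) ∉ [e_i,e_i'] whenever defined, and for all process sequences 𝕡 from q to p, first_𝕡(f_i) ∉ [e_i,e_i'] whenever defined. Then Par_p(f_i) = [e_i,e_i'] for all i. -/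
/-- A message sequence chart (MSC) over processes `P`, labels `A`, and event set `E`. -/
structure MSC (P A E : Type) [Fintype E] where
  proc : E → P
  lbl : E → A
  pnext : E → E → Prop
  msg : E → E → Prop
  pnext_proc : ∀ {e f}, pnext e f → proc e = proc f
  pnext_succ_unique : ∀ {e f f'}, pnext e f → pnext e f' → f = f'
  pnext_pred_unique : ∀ {e e' f}, pnext e f → pnext e' f → e = e'
  msg_proc : ∀ {e f}, msg e f → proc e ≠ proc f
  msg_send_unique : ∀ {e f f'}, msg e f → msg e f' → f = f'
  msg_recv_unique : ∀ {e e' f}, msg e f → msg e' f → e = e'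
  msg_not_send_recv : ∀ {e f g}, msg e f → ¬ msg g e
  acyclic : ∀ e, ¬ Relation.TransGen (fun a b => pnext a b ∨ msg a b) e e
  proc_total : ∀ {e f}, proc e = proc f →
    Relation.ReflTransGen pnext e f ∨ Relation.ReflTransGen pnext f e
  fifo : ∀ {e e' f f'}, msg e f → msg e' f' → proc e = proc e' → proc f = proc f' →
    (Relation.ReflTransGen pnext e e' ↔ Relation.ReflTransGen pnext f f')

namespace MSC

variable {P A E : Type} [Fintype E]

/-- The edge relation `→proc ∪ →msg`. -/
def edge (M : MSC P A E) (e f : E) : Prop := M.pnext e f ∨ M.msg e f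

/-- The partial order `≤ = (→proc ∪ →msg)*`. -/
def le (M : MSC P A E) (e f : E) : Prop := Relation.ReflTransGen M.edge e f

/-- The strict order `< = (→proc ∪ →msg)⁺`. -/
def lt (M : MSC P A E) (e f : E) : Prop := Relation.TransGen M.edge e f

/-- `e ∥ f`: incomparability w.r.t. `≤`. -/
def par (M : MSC P A E) (e f : E) : Prop := ¬ M.le e f ∧ ¬ M.le f e

/-- `e ⋖ f`: strict order minus the direct process/message edges. -/
def cless (M : MSC P A E) (e f : E) : Prop := M.lt e f ∧ ¬ M.pnext e f ∧ ¬ M.msg e f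

/-- The (reflexive) order along a single process: `→proc*`. -/
def pord (M : MSC P A E) (e f : E) : Prop := Relation.ReflTransGen M.pnext e f

/-- `Past_p(f) = {g ∈ E_p : g < f}`. -/
def PastP (M : MSC P A E) (p : P) (f : E) : Set E := {g | M.proc g = p ∧ M.lt g f}

/-- `Fut_p(f) = {g ∈ E_p : f < g}`. -/
def FutP (M : MSC P A E) (p : P) (f : E) : Set E := {g | M.proc g = p ∧ M.lt f g}

/-- `Par_p(f) = {g ∈ E_p : g ∥ f}`. -/
def ParP (M : MSC P A E) (p : P) (f : E) : Set E := {g | M.proc g = p ∧ M.par g f}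

/-- `S` is an interval of consecutive events on process `p`. -/
def IsInterval (M : MSC P A E) (p : P) (S : Set E) : Prop :=
  (∀ e ∈ S, M.proc e = p) ∧
  ∀ e f g, e ∈ S → g ∈ S → M.pord e f → M.pord f g → f ∈ S

/-- The interval `[e,e'] = {g ∈ E_p : e ≤ g ≤ e'}` on process `p`. -/
def Intv (M : MSC P A E) (p : P) (e e' : E) : Set E :=
  {g | M.proc g = p ∧ M.pord e g ∧ M.pord g e'}

end MSC

/-- `e ≤_𝕡 f` for a process sequence `𝕡`. -/
def MSC.leSeq {P A E : Type} [Fintype E] (M : MSC P A E) : List P → E → E → Prop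
  | [], _, _ => False
  | [p], e, f => M.proc e = p ∧ M.pord e f
  | p :: ps, e, f => M.proc e = p ∧ ∃ g h, M.pord e g ∧ M.msg g h ∧ M.leSeq ps h f


namespace MSC

variable {P A E : Type} [Fintype E] {M : MSC P A E} {a b e f g : E} {p : P}

lemma pord_proc (h : M.pord e f) : M.proc e = M.proc f := by
  induction h with
  | refl => rfl
  | tail _ h2 ih => exact ih.trans (M.pnext_proc h2)

lemma pord_le (h : M.pord e f) : M.le e f :=
  by
  induction h with
  | refl => exact Relation.ReflTransGen.refl
  | tail _ h2 ih => exact ih.tail (Or.inl h2)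

lemma lt_le (h : M.lt e f) : M.le e f := h.to_reflTransGen

lemma le_lt_of_ne (h : M.le e f) (hne : e ≠ f) : M.lt e f := by
  rcases (Relation.reflTransGen_iff_eq_or_transGen.mp h) with h | h
  · exact absurd h.symm hne
  · exact h

lemma pord_lt_of_ne (h : M.pord e f) (hne : e ≠ f) : M.lt e f :=
  le_lt_of_ne (pord_le h) hne

lemma no_cycle (h1 : M.le e f) (h2 : M.lt f e) : False :=
  M.acyclic f (h2.trans_left h1)

lemma le_pord_of_proc_eq (hp : M.proc e = M.proc f) (h : M.le e f) : M.pord e f := by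
  rcases M.proc_total hp with h' | h'
  · exact h'
  · rcases eq_or_ne f e with rfl | hne
    · exact Relation.ReflTransGen.refl
    · exact absurd (no_cycle h (pord_lt_of_ne h' hne)) id

lemma leSeq_singleton : M.leSeq [p] e f ↔ (M.proc e = p ∧ M.pord e f) := Iff.rfl

lemma leSeq_cons2 {q : P} {ps : List P} :
    M.leSeq (p :: q :: ps) e f ↔
      (M.proc e = p ∧ ∃ g h, M.pord e g ∧ M.msg g h ∧ M.leSeq (q :: ps) h f) := Iff.rfl

lemma leSeq_cons_of_ne_nil {ps : List P} (hps : ps ≠ []) :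
    M.leSeq (p :: ps) e f ↔
      (M.proc e = p ∧ ∃ g h, M.pord e g ∧ M.msg g h ∧ M.leSeq ps h f) := by
  cases ps with
  | nil => exact absurd rfl hps
  | cons q t => exact leSeq_cons2

lemma leSeq_proc_head {ps : List P} (h : M.leSeq ps e f) : ps.head? = some (M.proc e) := by
  cases ps with
  | nil => exact absurd h id
  | cons q t =>
    cases t with
    | nil => simp [h.1]
    | cons r s => simp [h.1]

lemma leSeq_proc_last {ps : List P} (h : M.leSeq ps e f) :
    ps.getLast? = some (M.proc f) := by
  induction ps generalizing e with
  | nil => exact absurd h id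
  | cons q t ih =>
    cases t with
    | nil =>
      obtain ⟨h1, h2⟩ := h
      simp [← h1, pord_proc h2]
    | cons r s =>
      obtain ⟨_, g, h', _, _, hrest⟩ := h
      rw [List.getLast?_cons_cons]
      exact ih hrest

lemma leSeq_le {ps : List P} (h : M.leSeq ps e f) : M.le e f := by
  induction ps generalizing e with
  | nil => exact absurd h id
  | cons q t ih =>
    cases t with
    | nil => exact pord_le h.2
    | cons r s =>
      obtain ⟨_, g, h', hg, hm, hrest⟩ := h
      exact ((pord_le hg).tail (Or.inr hm)).trans (ih hrest)

lemma leSeq_pord_left {ps : List P} (hab : M.pord a b) (h : M.leSeq ps b f) :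
    M.leSeq ps a f := by
  cases ps with
  | nil => exact absurd h id
  | cons q t =>
    cases t with
    | nil => exact ⟨(pord_proc hab).trans h.1, hab.trans h.2⟩
    | cons r s =>
      obtain ⟨h1, g, h', hg, hm, hrest⟩ := h
      exact ⟨(pord_proc hab).trans h1, g, h', hab.trans hg, hm, hrest⟩

lemma leSeq_append_tail {l1 l2 : List P} (hl2 : l2 ≠ []) :
    ∀ {e}, M.leSeq (l1 ++ l2) e f → ∃ y, M.le e y ∧ M.leSeq l2 y f := by
  induction l1 with
  | nil => exact fun h => ⟨_, Relation.ReflTransGen.refl, h⟩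
  | cons q t ih =>
    intro e h
    have hne : t ++ l2 ≠ [] := fun hc => hl2 (List.append_eq_nil_iff.mp hc).2
    rw [List.cons_append, leSeq_cons_of_ne_nil hne] at h
    obtain ⟨_, g, h', hg, hm, hrest⟩ := h
    obtain ⟨y, hy1, hy2⟩ := ih hrest
    exact ⟨y, ((pord_le hg).tail (Or.inr hm)).trans hy1, hy2⟩

lemma le_exists_leSeq (h : M.le e f) :
    ∃ ps : List P, ps.Nodup ∧ ps.head? = some (M.proc e) ∧
      ps.getLast? = some (M.proc f) ∧ M.leSeq ps e f := by
  induction h using Relation.ReflTransGen.head_induction_on with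
  | refl => exact ⟨[M.proc f], by simp, by simp, by simp, rfl, Relation.ReflTransGen.refl⟩
  | head hedge _ ih =>
    rename_i a b _
    obtain ⟨ps, hnd, hhd, hlast, hseq⟩ := ih
    rcases hedge with hpn | hmsg
    · refine ⟨ps, hnd, ?_, hlast, leSeq_pord_left (Relation.ReflTransGen.single hpn) hseq⟩
      rw [hhd, M.pnext_proc hpn]
    · by_cases hmem : M.proc a ∈ ps
      · obtain ⟨s, t, rfl⟩ := List.mem_iff_append.mp hmem
        obtain ⟨y, hy1, hy2⟩ := leSeq_append_tail (by simp) hseq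
        have hproc : M.proc a = M.proc y := by
          have := leSeq_proc_head hy2
          simpa using this
        have hay : M.pord a y :=
          le_pord_of_proc_eq hproc
            ((Relation.ReflTransGen.single (show M.edge a b from Or.inr hmsg)).trans hy1)
        refine ⟨M.proc a :: t, (List.nodup_append.mp hnd).2.1, by simp, ?_,
          leSeq_pord_left hay hy2⟩
        rw [← hlast, List.getLast?_append, Option.or_of_isSome (List.getLast?_isSome.mpr (by simp))]
      · have hbne : ps ≠ [] := by rintro rfl; simp at hhd
        refine ⟨M.proc a :: ps, List.nodup_cons.mpr ⟨hmem, hnd⟩, by simp, ?_, ?_⟩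
        · cases ps with
          | nil => exact absurd rfl hbne
          | cons u v => rw [List.getLast?_cons_cons]; exact hlast
        · exact (leSeq_cons_of_ne_nil hbne).mpr ⟨rfl, a, b, Relation.ReflTransGen.refl, hmsg, hseq⟩

end MSC

lemma finset_exists_max {α : Type*} {r : α → α → Prop}
    (htrans : ∀ a b c, r a b → r b c → r a c) :
    ∀ (S : Finset α), S.Nonempty → (∀ a ∈ S, ∀ b ∈ S, r a b ∨ r b a) →
      ∃ m ∈ S, ∀ x ∈ S, r x m := by
  intro S
  induction S using Finset.cons_induction with
  | empty => intro h; simp at h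
  | cons a S hnotmem ih =>
    intro _ htot
    have hself : ∀ x ∈ Finset.cons a S hnotmem, r x x := fun x hx => by
      rcases htot x hx x hx with h | h <;> exact h
    rcases S.eq_empty_or_nonempty with rfl | hne
    · refine ⟨a, Finset.mem_cons_self a ∅, ?_⟩
      intro x hx
      rcases Finset.mem_cons.mp hx with rfl | hx
      · exact hself x (Finset.mem_cons_self x ∅)
      · simp at hx
    · obtain ⟨m, hm, hmax⟩ := ih hne (fun x hx y hy =>
        htot x (Finset.mem_cons_of_mem hx) y (Finset.mem_cons_of_mem hy))
      rcases htot a (Finset.mem_cons_self a S) m (Finset.mem_cons_of_mem hm) with h | h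
      · refine ⟨m, Finset.mem_cons_of_mem hm, ?_⟩
        intro x hx
        rcases Finset.mem_cons.mp hx with rfl | hx
        · exact h
        · exact hmax x hx
      · refine ⟨a, Finset.mem_cons_self a S, ?_⟩
        intro x hx
        rcases Finset.mem_cons.mp hx with rfl | hx
        · exact hself x (Finset.mem_cons_self x S)
        · exact htrans x m a (hmax x hx) h


/-- under the `Lint` conditions plus the `last`/`first`-avoidance
conditions, `Par_p(f_i) = [e_i, e_i']` for all `i`. -/
theorem stmt10 {P A E : Type} [Fintype E] (M : MSC P A E) (p q : P) (hpq : p ≠ q)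
    (k : ℕ) (e e' f : Fin k → E)
    (hep : ∀ i, M.proc (e i) = p) (he'p : ∀ i, M.proc (e' i) = p)
    (hee' : ∀ i, M.pord (e i) (e' i))
    (hfq : ∀ i, M.proc (f i) = q)
    (hmono : ∀ i j, i < j → M.lt (f i) (f j))
    (hpast : ∀ i, M.PastP p (e i) ⊆ M.PastP p (f i))
    (hfut : ∀ i, M.FutP p (e' i) ⊆ M.FutP p (f i))
    (hlast : ∀ i (ps : List P), ps.Nodup → ps.head? = some p → ps.getLast? = some q →
      ∀ g, M.leSeq ps g (f i) → (∀ h, M.leSeq ps h (f i) → M.pord h g) →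
        g ∉ M.Intv p (e i) (e' i))
    (hfirst : ∀ i (ps : List P), ps.Nodup → ps.head? = some q → ps.getLast? = some p →
      ∀ g, M.leSeq ps (f i) g → (∀ h, M.leSeq ps (f i) h → M.pord g h) →
        g ∉ M.Intv p (e i) (e' i)) :
    ∀ i, M.ParP p (f i) = M.Intv p (e i) (e' i) := by
  intro i
  ext g
  simp only [MSC.ParP, MSC.Intv, Set.mem_setOf_eq, MSC.par]
  constructor
  · rintro ⟨hgp, hgf, hfg⟩
    refine ⟨hgp, ?_, ?_⟩
    · by_contra h
      rcases M.proc_total ((hep i).trans hgp.symm) with h' | h'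
      · exact h h'
      · have hne : g ≠ e i := by rintro rfl; exact h h'
        have : g ∈ M.PastP p (f i) := hpast i ⟨hgp, MSC.pord_lt_of_ne h' hne⟩
        exact hgf (MSC.lt_le this.2)
    · by_contra h
      rcases M.proc_total (hgp.trans (he'p i).symm) with h' | h'
      · exact h h'
      · have hne : e' i ≠ g := by rintro rfl; exact h h'
        have : g ∈ M.FutP p (f i) := hfut i ⟨hgp, MSC.pord_lt_of_ne h' hne⟩
        exact hfg (MSC.lt_le this.2)
  · rintro ⟨hgp, hge, hge'⟩
    refine ⟨hgp, ?_, ?_⟩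
    · intro hle
      obtain ⟨ps, hnd, hhd, hlast', hseq⟩ := MSC.le_exists_leSeq hle
      rw [hgp] at hhd
      rw [hfq i] at hlast'
      have hSfin : (setOf (fun h => M.leSeq ps h (f i))).Finite := Set.toFinite _
      have hprocS : ∀ x ∈ hSfin.toFinset, M.proc x = p := by
        intro x hx
        have := MSC.leSeq_proc_head (hSfin.mem_toFinset.mp hx)
        rw [hhd] at this
        exact (Option.some_injective _ this).symm
      obtain ⟨m, hm, hmax⟩ := finset_exists_max
        (r := M.pord) (fun a b c hab hbc => hab.trans hbc) hSfin.toFinset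
        ⟨g, hSfin.mem_toFinset.mpr hseq⟩
        (fun x hx y hy => M.proc_total ((hprocS x hx).trans (hprocS y hy).symm))
      have hmS : M.leSeq ps m (f i) := hSfin.mem_toFinset.mp hm
      have hmp : M.proc m = p := hprocS m hm
      have hnot := hlast i ps hnd hhd hlast' m hmS
        (fun h hh => hmax h (hSfin.mem_toFinset.mpr hh))
      have hgm : M.pord g m := hmax g (hSfin.mem_toFinset.mpr hseq)
      have h1 : ¬ M.pord m (e' i) := fun hc => hnot ⟨hmp, hge.trans hgm, hc⟩
      rcases M.proc_total (hmp.trans (he'p i).symm) with h' | h'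
      · exact h1 h'
      · have hne : e' i ≠ m := by rintro rfl; exact h1 h'
        have : m ∈ M.FutP p (f i) := hfut i ⟨hmp, MSC.pord_lt_of_ne h' hne⟩
        exact MSC.no_cycle (MSC.leSeq_le hmS) this.2
    · intro hle
      obtain ⟨ps, hnd, hhd, hlast', hseq⟩ := MSC.le_exists_leSeq hle
      rw [hfq i] at hhd
      rw [hgp] at hlast'
      have hSfin : (setOf (fun h => M.leSeq ps (f i) h)).Finite := Set.toFinite _
      have hprocS : ∀ x ∈ hSfin.toFinset, M.proc x = p := by
        intro x hx
        have := MSC.leSeq_proc_last (hSfin.mem_toFinset.mp hx)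
        rw [hlast'] at this
        exact (Option.some_injective _ this).symm
      obtain ⟨m, hm, hmax⟩ := finset_exists_max
        (r := fun x y => M.pord y x) (fun a b c hab hbc => hbc.trans hab) hSfin.toFinset
        ⟨g, hSfin.mem_toFinset.mpr hseq⟩
        (fun x hx y hy => (M.proc_total ((hprocS x hx).trans (hprocS y hy).symm)).symm)
      have hmS : M.leSeq ps (f i) m := hSfin.mem_toFinset.mp hm
      have hmp : M.proc m = p := hprocS m hm
      have hnot := hfirst i ps hnd hhd hlast' m hmS
        (fun h hh => hmax h (hSfin.mem_toFinset.mpr hh))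
      have hmg : M.pord m g := hmax g (hSfin.mem_toFinset.mpr hseq)
      have h1 : ¬ M.pord (e i) m := fun hc => hnot ⟨hmp, hc, hmg.trans hge'⟩
      rcases M.proc_total ((hep i).trans hmp.symm) with h' | h'
      · exact h1 h'
      · have hne : m ≠ e i := by rintro rfl; exact h1 h'
        have : m ∈ M.PastP p (f i) := hpast i ⟨hmp, MSC.pord_lt_of_ne h' hne⟩
        exact MSC.no_cycle (MSC.leSeq_le hmS) this.2
end

section
/- Conversely: if Par_p(f_i) = [e_i,e_i'] with [e_i,e_i'] non-empty, then Past_p(e_i) = Past_p(f_i), Fut_p(e_i') = Fut_p(f_i), and for every process sequence 𝕡 (from p to q) with last_𝕡(f_i) defined, last_𝕡(f_i) ∉ [e_i,e_i'], and symmetrically for first_𝕡(f_i). -/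
namespace MSC

variable {P A E : Type} [Fintype E] (M : MSC P A E)

lemma pord_le_s11 {a b : E} (h : M.pord a b) : M.le a b :=
  Relation.ReflTransGen.mono (fun _ _ h => Or.inl h) a b h

lemma lt_of_le_ne {a b : E} (h : M.le a b) (hne : a ≠ b) : M.lt a b := by
  rcases (Relation.reflTransGen_iff_eq_or_transGen.mp h) with rfl | h
  · exact absurd rfl hne
  · exact h

lemma lt_irrefl (a : E) : ¬ M.lt a a := M.acyclic a

lemma lt_of_lt_of_le {a b c : E} (h : M.lt a b) (h' : M.le b c) : M.lt a c :=
  Relation.TransGen.trans_left h h'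

lemma lt_of_le_of_lt {a b c : E} (h : M.le a b) (h' : M.lt b c) : M.lt a c :=
  Relation.TransGen.trans_right h h'

lemma leSeq_le_s11 : ∀ (ps : List P) (a b : E), M.leSeq ps a b → M.le a b
  | [], _, _, h => h.elim
  | [_], _, _, h => M.pord_le_s11 h.2
  | _ :: p' :: ps, a, b, ⟨_, g, h, hag, hgh, hrest⟩ =>
    ((M.pord_le_s11 hag).trans (Relation.ReflTransGen.single (Or.inr hgh))).trans
      (leSeq_le_s11 (p' :: ps) h b hrest)

lemma proc_comparable {a b : E} (h : M.proc a = M.proc b) :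
    M.pord a b ∨ M.pord b a := M.proc_total h

end MSC

/-- conversely, if `Par_p(f) = [e,e']` is a non-empty interval, then
`Past_p(e) = Past_p(f)`, `Fut_p(e') = Fut_p(f)`, and no `last_𝕡(f)` (for `𝕡` from
`p` to `q`) nor `first_𝕡(f)` (for `𝕡` from `q` to `p`) lies in `[e,e']`. -/
theorem stmt11 {P A E : Type} [Fintype E] (M : MSC P A E) (p q : P) (hpq : p ≠ q)
    (e e' f : E) (hep : M.proc e = p) (he'p : M.proc e' = p) (hfq : M.proc f = q)
    (hee' : M.pord e e')
    (hpar : M.ParP p f = M.Intv p e e') :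
    M.PastP p e = M.PastP p f ∧ M.FutP p e' = M.FutP p f ∧
    (∀ ps : List P, ps.Nodup → ps.head? = some p → ps.getLast? = some q →
      ∀ g, M.leSeq ps g f → (∀ h, M.leSeq ps h f → M.pord h g) →
        g ∉ M.Intv p e e') ∧
    (∀ ps : List P, ps.Nodup → ps.head? = some q → ps.getLast? = some p →
      ∀ g, M.leSeq ps f g → (∀ h, M.leSeq ps f h → M.pord g h) →
        g ∉ M.Intv p e e') := by
  classical
  -- e and e' are parallel to f
  have heI : e ∈ M.Intv p e e' := ⟨hep, Relation.ReflTransGen.refl, hee'⟩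
  have he'I : e' ∈ M.Intv p e e' := ⟨he'p, hee', Relation.ReflTransGen.refl⟩
  have hePar : e ∈ M.ParP p f := by rw [hpar]; exact heI
  have he'Par : e' ∈ M.ParP p f := by rw [hpar]; exact he'I
  obtain ⟨-, hef, hfe⟩ := hePar
  obtain ⟨-, he'f, hfe'⟩ := he'Par
  -- comparability of non-parallel p-events with f
  have hcomp : ∀ g : E, M.proc g = p → g ∉ M.Intv p e e' → M.le g f ∨ M.le f g := by
    intro g hg hgI
    by_contra hc
    push_neg at hc
    exact hgI (hpar ▸ (⟨hg, hc.1, hc.2⟩ : g ∈ M.ParP p f))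
  have hgf_ne : ∀ g : E, M.proc g = p → g ≠ f := by
    intro g hg hgf; exact hpq (hg ▸ hgf ▸ hfq ▸ rfl)
  refine ⟨?_, ?_, ?_, ?_⟩
  · -- PastP p e = PastP p f
    ext g
    constructor
    · rintro ⟨hg, hge⟩
      refine ⟨hg, ?_⟩
      have hgI : g ∉ M.Intv p e e' := by
        rintro ⟨-, heg, -⟩
        exact M.lt_irrefl g (M.lt_of_lt_of_le hge (M.pord_le_s11 heg))
      rcases hcomp g hg hgI with h | h
      · exact M.lt_of_le_ne h (hgf_ne g hg)
      · exact absurd (M.lt_of_lt_of_le (M.lt_of_le_of_lt h hge) (M.pord_le_s11 hee')).to_reflTransGen hfe'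
    · rintro ⟨hg, hgf⟩
      refine ⟨hg, ?_⟩
      rcases M.proc_comparable (hg.trans hep.symm) with h | h
      · refine M.lt_of_le_ne (M.pord_le_s11 h) ?_
        rintro rfl
        exact hef hgf.to_reflTransGen
      · exact absurd (M.lt_of_le_of_lt (M.pord_le_s11 h) hgf).to_reflTransGen hef
  · -- FutP p e' = FutP p f
    ext g
    constructor
    · rintro ⟨hg, he'g⟩
      refine ⟨hg, ?_⟩
      have hgI : g ∉ M.Intv p e e' := by
        rintro ⟨-, -, hge'⟩
        exact M.lt_irrefl e' (M.lt_of_lt_of_le he'g (M.pord_le_s11 hge'))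
      rcases hcomp g hg hgI with h | h
      · exact absurd (M.lt_of_le_of_lt (M.pord_le_s11 hee') (M.lt_of_lt_of_le he'g h)).to_reflTransGen hef
      · exact M.lt_of_le_ne h (fun hfg => hgf_ne g hg hfg.symm)
    · rintro ⟨hg, hfg⟩
      refine ⟨hg, ?_⟩
      rcases M.proc_comparable (hg.trans he'p.symm) with h | h
      · exact absurd (M.lt_of_lt_of_le hfg (M.pord_le_s11 h)).to_reflTransGen hfe'
      · refine M.lt_of_le_ne (M.pord_le_s11 h) ?_
        rintro rfl
        exact hfe' hfg.to_reflTransGen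
  · intro ps _ _ _ g hle _ hgI
    rw [← hpar] at hgI
    exact hgI.2.1 (M.leSeq_le_s11 ps g f hle)
  · intro ps _ _ _ g hle _ hgI
    rw [← hpar] at hgI
    exact hgI.2.2 (M.leSeq_le_s11 ps f g hle)
end
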